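/- Let ℓ ≥ 2, ρ ∈ (−1/(ℓ−1), 0], and d ∈ (0,1). Define θ = 0 if d ∈ (0, 1+(ℓ−1)ρ) and θ = (1−d)/(ℓ−1) + ρ if d ∈ [1+(ℓ−1)ρ, 1), and let D* be the ℓ×ℓ real matrix with diagonal entries d and off-diagonal entries θ. Then D* is positive definite, Σ^{(ℓ)} − D* is positive semidefinite, tr(D*) = ℓd, and for every real symmetric ℓ×ℓ matrix D with 0 ≺ D ⪯ Σ^{(ℓ)} and tr(D) ≤ ℓd one has det(D) ≤ det(D*), with equality only if D = D*. -/

import Mathlib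

open Matrix Finset
open scoped MatrixOrder


private def Jmat (n : ℕ) : Matrix (Fin n) (Fin n) ℝ := Matrix.of fun _ _ => 1

private noncomputable def smat (n : ℕ) (a b : ℝ) : Matrix (Fin n) (Fin n) ℝ :=
  a • (1 : Matrix (Fin n) (Fin n) ℝ) + b • Jmat n

private lemma smat_apply {n : ℕ} (a b : ℝ) (i j : Fin n) :
    smat n a b i j = (if i = j then a else 0) + b := by
  by_cases h : i = j <;>
    simp [smat, Jmat, Matrix.add_apply, Matrix.smul_apply, Matrix.one_apply, h]

private lemma of_ite_eq_smat {n : ℕ} (p q : ℝ) :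
    (Matrix.of fun i j : Fin n => if i = j then p else q) = smat n (p - q) q := by
  ext i j
  rw [smat_apply]
  by_cases h : i = j <;> simp [h]

private lemma smat_isHermitian {n : ℕ} (a b : ℝ) : (smat n a b).IsHermitian := by
  ext i j
  simp only [Matrix.conjTranspose_apply, smat_apply, star_trivial]
  by_cases h : i = j <;> simp [h, eq_comm]

private lemma smat_quad {n : ℕ} (a b : ℝ) (x : Fin n → ℝ) :
    x ⬝ᵥ (smat n a b *ᵥ x) = a * ∑ i, x i ^ 2 + b * (∑ i, x i) ^ 2 := by
  have hrow : ∀ i, (smat n a b *ᵥ x) i = a * x i + b * ∑ j, x j := by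
    intro i
    simp only [Matrix.mulVec, dotProduct, smat_apply, add_mul, ite_mul, zero_mul,
      Finset.sum_add_distrib, Finset.sum_ite_eq, Finset.mem_univ, if_true, ← Finset.mul_sum]
  simp only [dotProduct, hrow]
  rw [Finset.sum_congr rfl (fun i _ => mul_add (x i) (a * x i) (b * ∑ j, x j)),
    Finset.sum_add_distrib]
  rw [← Finset.sum_mul]
  ring_nf
  rw [Finset.mul_sum]
  congr 1
  · exact Finset.sum_congr rfl fun i _ => by ring

private lemma smat_posSemidef {n : ℕ} {a b : ℝ} (ha : 0 ≤ a) (hab : 0 ≤ a + n * b) :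
    (smat n a b).PosSemidef := by
  refine PosSemidef.of_dotProduct_mulVec_nonneg (smat_isHermitian a b) (fun x => ?_)
  have hq := smat_quad a b x
  have hCS : (∑ i, x i) ^ 2 ≤ n * ∑ i, x i ^ 2 := by
    simpa using sq_sum_le_card_mul_sum_sq (s := (Finset.univ : Finset (Fin n))) (f := x)
  have hQ : 0 ≤ ∑ i, x i ^ 2 := Finset.sum_nonneg fun i _ => sq_nonneg _
  simp only [star_trivial]
  rw [hq]
  rcases le_or_gt 0 b with hb | hb
  · positivity
  · nlinarith

private lemma smat_posDef {n : ℕ} {a b : ℝ} (ha : 0 < a) (hab : 0 < a + n * b) :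
    (smat n a b).PosDef := by
  refine PosDef.of_dotProduct_mulVec_pos (smat_isHermitian a b) (fun x hx => ?_)
  have hq := smat_quad a b x
  have hCS : (∑ i, x i) ^ 2 ≤ n * ∑ i, x i ^ 2 := by
    simpa using sq_sum_le_card_mul_sum_sq (s := (Finset.univ : Finset (Fin n))) (f := x)
  have hQ : 0 < ∑ i, x i ^ 2 := by
    obtain ⟨i, hi⟩ := Function.ne_iff.mp hx
    exact Finset.sum_pos' (fun j _ => sq_nonneg _)
      ⟨i, Finset.mem_univ i, by rw [sq]; exact mul_self_pos.mpr hi⟩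
  simp only [star_trivial]
  rw [hq]
  rcases le_or_gt 0 b with hb | hb
  · have : 0 ≤ b * (∑ i, x i) ^ 2 := by positivity
    nlinarith
  · nlinarith

private lemma Jmat_mul_Jmat {n : ℕ} : Jmat n * Jmat n = (n : ℝ) • Jmat n := by
  ext i j
  simp [Jmat, Matrix.mul_apply]

private lemma smat_mul {n : ℕ} (a b c e : ℝ) :
    smat n a b * smat n c e = smat n (a * c) (a * e + b * c + n * b * e) := by
  simp only [smat, Matrix.add_mul, Matrix.mul_add, Matrix.smul_mul, Matrix.mul_smul,
    Matrix.one_mul, Matrix.mul_one, Jmat_mul_Jmat]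
  module

private lemma smat_trace {n : ℕ} (a b : ℝ) : (smat n a b).trace = n * a + n * b := by
  simp [Matrix.trace, Matrix.diag, smat_apply, Finset.sum_add_distrib, mul_comm]

private lemma entry_sum_eq_dot (n : ℕ) (A : Matrix (Fin n) (Fin n) ℝ) :
    (fun _ => (1:ℝ)) ⬝ᵥ (A *ᵥ fun _ => (1:ℝ)) = ∑ i, ∑ j, A i j := by
  simp [dotProduct, Matrix.mulVec]

private lemma smat_entry_sum {n : ℕ} (a b : ℝ) :
    ∑ i, ∑ j, smat n a b i j = n * a + n * (n * b) := by
  simp [smat_apply, Finset.sum_add_distrib, Finset.mul_sum, mul_comm, mul_left_comm]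

private lemma trace_Jmat_mul {n : ℕ} (D : Matrix (Fin n) (Fin n) ℝ) :
    (Jmat n * D).trace = ∑ i, ∑ j, D i j := by
  rw [Finset.sum_comm (s := Finset.univ) (t := Finset.univ) (f := fun i j => D i j)]
  simp [Matrix.trace, Matrix.diag, Matrix.mul_apply, Jmat]

private lemma smat_mul_trace {n : ℕ} (a b : ℝ) (D : Matrix (Fin n) (Fin n) ℝ) :
    (smat n a b * D).trace = a * D.trace + b * ∑ i, ∑ j, D i j := by
  simp only [smat, Matrix.add_mul, Matrix.smul_mul, Matrix.one_mul, Matrix.trace_add,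
    Matrix.trace_smul, trace_Jmat_mul, smul_eq_mul]

private lemma smat_sub {n : ℕ} (a b c e : ℝ) :
    smat n a b - smat n c e = smat n (a - c) (b - e) := by
  simp only [smat]
  module


private lemma amgm {n : ℕ} (μ : Fin n → ℝ) (hpos : ∀ i, 0 < μ i) (hsum : ∑ i, μ i ≤ n) :
    (∏ i, μ i ≤ 1) ∧ (∏ i, μ i = 1 → ∀ i, μ i = 1) := by
  have hsum' : ∑ i, (μ i - 1) ≤ 0 := by
    have : ∑ i : Fin n, (1 : ℝ) = n := by simp
    rw [Finset.sum_sub_distrib, this]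
    linarith
  have hlog : ∀ i, Real.log (μ i) ≤ μ i - 1 := fun i => Real.log_le_sub_one_of_pos (hpos i)
  have hlogprod : Real.log (∏ i, μ i) = ∑ i, Real.log (μ i) :=
    Real.log_prod (fun i _ => (hpos i).ne')
  have hprodpos : 0 < ∏ i, μ i := Finset.prod_pos (fun i _ => hpos i)
  have hle : Real.log (∏ i, μ i) ≤ 0 := by
    rw [hlogprod]
    exact le_trans (Finset.sum_le_sum fun i _ => hlog i) hsum'
  constructor
  · by_contra h
    exact absurd (Real.log_pos (lt_of_not_ge h)) (not_lt.mpr hle)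
  · intro hP i
    have hzero : ∑ j, (μ j - 1 - Real.log (μ j)) = 0 := by
      have h0 : ∑ j, Real.log (μ j) = 0 := by rw [← hlogprod, hP, Real.log_one]
      have h1 : ∑ j, (μ j - 1 - Real.log (μ j)) = ∑ j, (μ j - 1) - ∑ j, Real.log (μ j) := by
        rw [Finset.sum_sub_distrib]
      have h2 : 0 ≤ ∑ j, (μ j - 1 - Real.log (μ j)) :=
        Finset.sum_nonneg fun j _ => by linarith [hlog j]
      rw [h1, h0] at *
      linarith
    have := (Finset.sum_eq_zero_iff_of_nonneg
      (fun j _ => by linarith [hlog j] : ∀ j ∈ Finset.univ, 0 ≤ μ j - 1 - Real.log (μ j))).mp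
      hzero i (Finset.mem_univ i)
    by_contra hne
    have := Real.log_lt_sub_one_of_pos (hpos i) hne
    linarith

private lemma posdef_conj {n : ℕ} {A S : Matrix (Fin n) (Fin n) ℝ} (hA : A.PosDef)
    (hSh : S.IsHermitian) (hS : IsUnit S) : (S * A * S).PosDef := by
  refine PosDef.of_dotProduct_mulVec_pos ?_ (fun x hx => ?_)
  · have h := isHermitian_conjTranspose_mul_mul S hA.1
    rwa [hSh.eq] at h
  · have hinj := Matrix.mulVec_injective_iff_isUnit.mpr hS
    have hxne : S *ᵥ x ≠ 0 := (hinj.ne_iff' (Matrix.mulVec_zero S)).2 hx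
    have h := hA.dotProduct_mulVec_pos hxne
    simp only [star_mulVec, dotProduct_mulVec, vecMul_vecMul] at h ⊢
    rwa [hSh.eq] at h

private lemma key {n : ℕ} {A B : Matrix (Fin n) (Fin n) ℝ} (hA : A.PosDef) (hB : B.PosDef)
    (htr : (A * B).trace ≤ n) :
    A.det * B.det ≤ 1 ∧ (A.det * B.det = 1 → A * B = 1) := by
  set S := CFC.sqrt A with hSdef
  have hSpsd : S.PosSemidef := (CFC.sqrt_nonneg A).posSemidef
  have hSh : S.IsHermitian := hSpsd.1
  have hSS : S * S = A := CFC.sqrt_mul_sqrt_self A hA.posSemidef.nonneg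
  have hdetS : S.det * S.det = A.det := by rw [← det_mul, hSS]
  have hdetA : 0 < A.det := hA.det_pos
  have hdetSne : S.det ≠ 0 := fun h => by rw [h, mul_zero] at hdetS; linarith
  have hSunit : IsUnit S := (Matrix.isUnit_iff_isUnit_det S).mpr hdetSne.isUnit
  set C := S * B * S with hCdef
  have hC : C.PosDef := posdef_conj hB hSh hSunit
  have htrC : C.trace = (A * B).trace := by
    rw [hCdef, Matrix.trace_mul_comm, ← Matrix.mul_assoc, hSS, Matrix.trace_mul_comm]
  have hdetC : C.det = A.det * B.det := by
    rw [hCdef, det_mul, det_mul]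
    rw [← hdetS]; ring
  have hCh : C.IsHermitian := hC.1
  set μ := hCh.eigenvalues with hμ
  have hμpos : ∀ i, 0 < μ i := hC.eigenvalues_pos
  have hdetμ : C.det = ∏ i, μ i := by
    simpa using hCh.det_eq_prod_eigenvalues
  have htrμ : C.trace = ∑ i, μ i := by
    rw [hCh.trace_eq_sum_eigenvalues]
    simp
    rfl
  have hsum : ∑ i, μ i ≤ n := by rw [← htrμ, htrC]; exact htr
  obtain ⟨h1, h2⟩ := amgm μ hμpos hsum
  constructor
  · rw [← hdetC, hdetμ]; exact h1
  · intro hdet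
    have hμ1 : ∀ i, μ i = 1 := h2 (by rw [← hdetμ, hdetC]; exact hdet)
    have hC1 : C = 1 := by
      nth_rewrite 1 [hCh.spectral_theorem]
      have : Matrix.diagonal (RCLike.ofReal ∘ μ) = (1 : Matrix (Fin n) (Fin n) ℝ) := by
        ext i j
        by_cases h : i = j <;> simp [Matrix.diagonal_apply, Matrix.one_apply, h, hμ1]
      rw [this, map_one]
    have hABS : (A * B) * S = S := by
      calc (A * B) * S = S * (S * B * S) := by rw [← hSS]; noncomm_ring
      _ = S := by rw [← hCdef, hC1, Matrix.mul_one]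
    calc A * B = (A * B) * (S * S⁻¹) := by rw [Matrix.mul_nonsing_inv S hdetSne.isUnit, Matrix.mul_one]
    _ = ((A * B) * S) * S⁻¹ := by noncomm_ring
    _ = S * S⁻¹ := by rw [hABS]
    _ = 1 := Matrix.mul_nonsing_inv S hdetSne.isUnit

/-- for ρ ∈ (-1/(ℓ-1), 0], the matrix `D*` with diagonal entries `d` and
off-diagonal entries `θ` (with `θ = 0` for `d < 1+(ℓ-1)ρ` and `θ = (1-d)/(ℓ-1)+ρ` otherwise)
is the unique optimal solution of the convex program defining the centralized Gaussian
rate-distortion function. -/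
theorem stmt_6 (ℓ : ℕ) (hℓ : 2 ≤ ℓ) (ρ d : ℝ)
    (hρ₁ : -(1 / ((ℓ : ℝ) - 1)) < ρ) (hρ₂ : ρ ≤ 0) (hd₁ : 0 < d) (hd₂ : d < 1)
    (θ : ℝ)
    (hθ : θ = if d < 1 + ((ℓ : ℝ) - 1) * ρ then 0 else (1 - d) / ((ℓ : ℝ) - 1) + ρ)
    (S Dstar : Matrix (Fin ℓ) (Fin ℓ) ℝ)
    (hS : S = Matrix.of fun i j => if i = j then (1 : ℝ) else ρ)
    (hDstar : Dstar = Matrix.of fun i j => if i = j then d else θ) :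
    Dstar.PosDef ∧ (S - Dstar).PosSemidef ∧ Dstar.trace = (ℓ : ℝ) * d ∧
    ∀ D : Matrix (Fin ℓ) (Fin ℓ) ℝ, D.IsSymm → D.PosDef → (S - D).PosSemidef →
      D.trace ≤ (ℓ : ℝ) * d → (D.det ≤ Dstar.det ∧ (D.det = Dstar.det → D = Dstar)) := by
  have hl2 : (2:ℝ) ≤ (ℓ:ℝ) := by exact_mod_cast hℓ
  have hl1 : (0:ℝ) < (ℓ:ℝ) - 1 := by linarith
  have hinv1 : ((ℓ:ℝ) - 1) * (1 / ((ℓ:ℝ) - 1)) = 1 := by field_simp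
  have hρl : -1 < ((ℓ:ℝ) - 1) * ρ := by nlinarith [mul_lt_mul_of_pos_left hρ₁ hl1]
  obtain ⟨hθ0, hθρ, he1pos, he1le, hs2'⟩ :
      θ ≤ 0 ∧ ρ ≤ θ ∧ 0 < d + ((ℓ:ℝ)-1)*θ ∧ d + ((ℓ:ℝ)-1)*θ ≤ 1 + ((ℓ:ℝ)-1)*ρ ∧
        θ * (1 + ((ℓ:ℝ)-1)*ρ) = θ * (d + ((ℓ:ℝ)-1)*θ) := by
    by_cases hif : d < 1 + ((ℓ:ℝ) - 1) * ρ
    · rw [if_pos hif] at hθ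
      subst hθ
      refine ⟨le_refl 0, hρ₂, by linarith, by linarith, by ring⟩
    · rw [if_neg hif] at hθ
      push_neg at hif
      have he1eq : d + ((ℓ:ℝ)-1)*θ = 1 + ((ℓ:ℝ)-1)*ρ := by
        rw [hθ]; field_simp; ring
      have hθ0 : θ ≤ 0 := by
        by_contra h
        push_neg at h
        nlinarith [mul_pos hl1 h]
      have hθρ : ρ ≤ θ := by
        rw [hθ]
        have : 0 ≤ (1-d)/((ℓ:ℝ)-1) := div_nonneg (by linarith) hl1.le
        linarith
      exact ⟨hθ0, hθρ, by rw [he1eq]; linarith, he1eq.le, by rw [he1eq]⟩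
  have he2 : 0 < d - θ := by linarith
  -- structured forms
  have hSstruct : S = smat ℓ (1 - ρ) ρ := by rw [hS, of_ite_eq_smat]
  have hDstruct : Dstar = smat ℓ (d - θ) θ := by rw [hDstar, of_ite_eq_smat]
  -- the inverse matrix M
  set α : ℝ := 1 / (d - θ) with hαdef
  set β : ℝ := -θ / ((d - θ) * (d + ((ℓ:ℝ)-1)*θ)) with hβdef
  have hαpos : 0 < α := by rw [hαdef]; positivity
  have hβ0 : 0 ≤ β := by
    rw [hβdef]
    exact div_nonneg (by linarith) (mul_pos he2 he1pos).le
  have hne2 : d - θ ≠ 0 := he2.ne'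
  have hne1 : d + ((ℓ:ℝ)-1)*θ ≠ 0 := he1pos.ne'
  have hne1' : d + θ * ((ℓ:ℝ)-1) ≠ 0 := by rwa [mul_comm] at hne1
  set M : Matrix (Fin ℓ) (Fin ℓ) ℝ := smat ℓ α β with hMdef
  have hαβ : α + ℓ * β = 1 / (d + ((ℓ:ℝ)-1)*θ) := by
    rw [hαdef, hβdef]
    field_simp
    ring_nf
    try simp
    try ring
  have hMpd : M.PosDef := by
    refine smat_posDef hαpos ?_
    rw [hαβ]
    positivity
  have hMD1 : M * Dstar = 1 := by
    rw [hMdef, hDstruct, smat_mul]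
    have h1 : α * (d - θ) = 1 := by rw [hαdef]; field_simp
    have h2 : α * θ + β * (d - θ) + ℓ * β * θ = 0 := by
      rw [hαdef, hβdef]
      field_simp
      ring
    rw [h1, h2]
    simp [smat]
  have hDpd : Dstar.PosDef := by
    rw [hDstruct]
    exact smat_posDef he2 (by nlinarith)
  have hSDpsd : (S - Dstar).PosSemidef := by
    have : S - Dstar = smat ℓ ((1 - ρ) - (d - θ)) (ρ - θ) := by
      rw [hSstruct, hDstruct, smat_sub]
    rw [this]
    refine smat_posSemidef (by linarith) (by nlinarith)
  have htrD : Dstar.trace = (ℓ:ℝ) * d := by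
    rw [hDstruct, smat_trace]; ring
  have hMdetDdet : M.det * Dstar.det = 1 := by
    rw [← Matrix.det_mul, hMD1, Matrix.det_one]
  have hMdetpos : 0 < M.det := hMpd.det_pos
  refine ⟨hDpd, hSDpsd, htrD, ?_⟩
  intro D _ hDpd' hSDpsd' htrD'
  -- sum of entries bound
  have hsumD : ∑ i, ∑ j, D i j ≤ (ℓ:ℝ) * (1 + ((ℓ:ℝ)-1)*ρ) := by
    have h0 := hSDpsd'.dotProduct_mulVec_nonneg (fun _ => (1:ℝ))
    rw [show (star (fun _ => (1:ℝ)) : Fin ℓ → ℝ) = fun _ => (1:ℝ) from by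
        funext i; simp, entry_sum_eq_dot] at h0
    have hsub : ∑ i, ∑ j, (S - D) i j = (∑ i, ∑ j, S i j) - ∑ i, ∑ j, D i j := by
      simp [Matrix.sub_apply, Finset.sum_sub_distrib]
    have hSsum : ∑ i, ∑ j, S i j = (ℓ:ℝ) * (1 - ρ) + (ℓ:ℝ) * ((ℓ:ℝ) * ρ) := by
      rw [hSstruct, smat_entry_sum]
    rw [hsub, hSsum] at h0
    nlinarith [h0]
  have htrMD : (M * D).trace ≤ (ℓ:ℕ) := by
    rw [hMdef, smat_mul_trace]
    have hb1 : α * D.trace ≤ α * ((ℓ:ℝ) * d) := mul_le_mul_of_nonneg_left htrD' hαpos.le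
    have hb2 : β * ∑ i, ∑ j, D i j ≤ β * ((ℓ:ℝ) * (1 + ((ℓ:ℝ)-1)*ρ)) :=
      mul_le_mul_of_nonneg_left hsumD hβ0
    have hs1 : α * d + β * (d + ((ℓ:ℝ)-1)*θ) = 1 := by
      rw [hαdef, hβdef]
      field_simp
      ring
    have hs2 : β * (1 + ((ℓ:ℝ)-1)*ρ) = β * (d + ((ℓ:ℝ)-1)*θ) := by
      rw [hβdef]
      rw [div_mul_eq_mul_div, div_mul_eq_mul_div]
      congr 1
      linear_combination -hs2'
    have heq : α * ((ℓ:ℝ) * d) + β * ((ℓ:ℝ) * (1 + ((ℓ:ℝ)-1)*ρ)) = (ℓ:ℝ) := by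
      have h := hs1
      linear_combination (ℓ:ℝ) * hs1 + (ℓ:ℝ) * hs2
    push_cast
    linarith
  obtain ⟨hkle, hkeq⟩ := key hMpd hDpd' htrMD
  constructor
  · have := hkle
    rw [← hMdetDdet] at this
    exact (mul_le_mul_iff_of_pos_left hMdetpos).mp this
  · intro hdeq
    have hMDeq : M * D = 1 := hkeq (by rw [hdeq, hMdetDdet])
    calc D = 1 * D := (Matrix.one_mul D).symm
    _ = (Dstar * M) * D := by rw [mul_eq_one_comm.mp hMD1]
    _ = Dstar * (M * D) := Matrix.mul_assoc _ _ _
    _ = Dstar := by rw [hMDeq, Matrix.mul_one]
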